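/- (The SL(3) A-variety of the trefoil knot: ℓₐ = mₐ⁶.) Let z₁,…,z₄, y₁,…,y₄ ∈ ℂ, each different from 0 and 1, and assume all eight trefoil gluing equations c₁ = c₂ = ⋯ = c₈ = 1 hold. Define the exponentiated meridian path-coordinates A := y₁''/z₂'' and B := z₂''y₄''/(z₁''z₄''), and the exponentiated longitude path-coordinates P := z₁z₂z₄'·y₁''y₂''y₄'' / (z₁''z₂''z₃''·y₁y₂y₃') and Q := z₁·y₂·(y₄'')² / (z₁''z₂''(z₄'')²·y₁'y₂'·y₃³·y₄). Then P²·Q = (A²·B)⁶ and P·Q⁻¹ = (A·B⁻¹)⁶ (i.e. the longitude eigenvalues are the sixth powers of the meridian eigenvalues, ℓ₁ = m₁⁶ and ℓ₂ = m₂⁶, in cube-free form). -/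

import Mathlib

set_option maxHeartbeats 1000000


/-- The octahedron parameter `t' := (1−t)⁻¹`. -/
noncomputable def oPrime (t : ℂ) : ℂ := (1 - t)⁻¹

/-- The octahedron parameter `t'' := 1 − t⁻¹`. -/
noncomputable def oDPrime (t : ℂ) : ℂ := 1 - t⁻¹

/-- The `SL(3)` A-variety of the trefoil knot: on the locus where all eight
gluing equations `c₁ = ⋯ = c₈ = 1` hold, the exponentiated longitude
path-coordinates are sixth powers of the meridian path-coordinates:
`P²·Q = (A²·B)⁶` and `P·Q⁻¹ = (A·B⁻¹)⁶` (i.e. `ℓ₁ = m₁⁶` and `ℓ₂ = m₂⁶`). -/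
theorem trefoil_SL3_A_variety
    (z₁ z₂ z₃ z₄ y₁ y₂ y₃ y₄ : ℂ)
    (hz₁0 : z₁ ≠ 0) (hz₁1 : z₁ ≠ 1) (hz₂0 : z₂ ≠ 0) (hz₂1 : z₂ ≠ 1)
    (hz₃0 : z₃ ≠ 0) (hz₃1 : z₃ ≠ 1) (hz₄0 : z₄ ≠ 0) (hz₄1 : z₄ ≠ 1)
    (hy₁0 : y₁ ≠ 0) (hy₁1 : y₁ ≠ 1) (hy₂0 : y₂ ≠ 0) (hy₂1 : y₂ ≠ 1)
    (hy₃0 : y₃ ≠ 0) (hy₃1 : y₃ ≠ 1) (hy₄0 : y₄ ≠ 0) (hy₄1 : y₄ ≠ 1)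
    (hc₁ : z₃ * y₃ = 1)
    (hc₂ : z₄ * y₄ = 1)
    (hc₃ : z₁ * oPrime z₁ * oDPrime z₂ * oPrime z₄ * oDPrime z₄ *
      (y₁ * oPrime y₁ * oDPrime y₂ * oPrime y₄ * oDPrime y₄) = 1)
    (hc₄ : oDPrime z₁ * z₂ * oPrime z₂ * oPrime z₃ * oDPrime z₃ *
      (oDPrime y₁ * y₂ * oPrime y₂ * oPrime y₃ * oDPrime y₃) = 1)
    (hc₅ : z₁ * oPrime z₄ * oDPrime z₃ * (y₂ * oPrime y₃ * oDPrime y₄) = 1)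
    (hc₆ : z₂ * oPrime z₃ * oDPrime z₄ * (y₁ * oPrime y₄ * oDPrime y₃) = 1)
    (hc₇ : z₃ * oPrime z₂ * oDPrime z₁ * (y₄ * oPrime y₁ * oDPrime y₂) = 1)
    (hc₈ : z₄ * oPrime z₁ * oDPrime z₂ * (y₃ * oPrime y₂ * oDPrime y₁) = 1)
    (A B P Q : ℂ)
    (hA : A = oDPrime y₁ / oDPrime z₂)
    (hB : B = oDPrime z₂ * oDPrime y₄ / (oDPrime z₁ * oDPrime z₄))
    (hP : P = z₁ * z₂ * oPrime z₄ * (oDPrime y₁ * oDPrime y₂ * oDPrime y₄) /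
      (oDPrime z₁ * oDPrime z₂ * oDPrime z₃ * (y₁ * y₂ * oPrime y₃)))
    (hQ : Q = z₁ * y₂ * (oDPrime y₄) ^ 2 /
      (oDPrime z₁ * oDPrime z₂ * (oDPrime z₄) ^ 2 *
        (oPrime y₁ * oPrime y₂ * y₃ ^ 3 * y₄))) :
    P ^ 2 * Q = (A ^ 2 * B) ^ 6 ∧ P * Q⁻¹ = (A * B⁻¹) ^ 6 := by
  have sub1 : ∀ t : ℂ, t ≠ 1 → (1 : ℂ) - t ≠ 0 := fun t ht => sub_ne_zero.mpr (Ne.symm ht)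
  have hz₁s : (1 : ℂ) - z₁ ≠ 0 := sub1 _ hz₁1
  have hz₂s : (1 : ℂ) - z₂ ≠ 0 := sub1 _ hz₂1
  have hz₃s : (1 : ℂ) - z₃ ≠ 0 := sub1 _ hz₃1
  have hz₄s : (1 : ℂ) - z₄ ≠ 0 := sub1 _ hz₄1
  have hy₁s : (1 : ℂ) - y₁ ≠ 0 := sub1 _ hy₁1
  have hy₂s : (1 : ℂ) - y₂ ≠ 0 := sub1 _ hy₂1
  -- y₃ = z₃⁻¹, y₄ = z₄⁻¹
  have h3 : y₃ = z₃⁻¹ := (inv_eq_of_mul_eq_one_right hc₁).symm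
  have h4 : y₄ = z₄⁻¹ := (inv_eq_of_mul_eq_one_right hc₂).symm
  subst h3 h4
  simp only [oPrime, oDPrime, inv_inv] at *
  have hz₃i : (1 : ℂ) - z₃⁻¹ ≠ 0 := by
    rw [sub_ne_zero]; intro h; exact hz₃1 (by field_simp at h; linear_combination h)
  have hz₄i : (1 : ℂ) - z₄⁻¹ ≠ 0 := by
    rw [sub_ne_zero]; intro h; exact hz₄1 (by field_simp at h; linear_combination h)
  -- y₂ = z₁⁻¹ from c₅
  have hz₁m : z₁ - 1 ≠ 0 := fun h => hz₁s (by linear_combination -h)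
  have hz₂m : z₂ - 1 ≠ 0 := fun h => hz₂s (by linear_combination -h)
  have hz₃m : z₃ - 1 ≠ 0 := fun h => hz₃s (by linear_combination -h)
  have hz₄m : z₄ - 1 ≠ 0 := fun h => hz₄s (by linear_combination -h)
  have h2 : y₂ = z₁⁻¹ := by
    have h : z₁ * y₂ = 1 := by
      field_simp at hc₅
      exact mul_right_cancel₀ (mul_ne_zero (mul_ne_zero hz₃m hz₃0) hz₄s)
        (show z₁ * y₂ * ((z₃ - 1) * z₃ * (1 - z₄)) = 1 * ((z₃ - 1) * z₃ * (1 - z₄)) by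
          linear_combination ((z₃ - 1) * z₃ * (1 - z₄)) * hc₅)
    exact (inv_eq_of_mul_eq_one_right h).symm
  -- y₁ = z₂⁻¹ from c₆
  have h1 : y₁ = z₂⁻¹ := by
    have h : z₂ * y₁ = 1 := by
      field_simp at hc₆
      exact mul_right_cancel₀ (mul_ne_zero (mul_ne_zero hz₄m hz₄0) hz₃s)
        (show z₂ * y₁ * ((z₄ - 1) * z₄ * (1 - z₃)) = 1 * ((z₄ - 1) * z₄ * (1 - z₃)) by
          linear_combination ((z₄ - 1) * z₄ * (1 - z₃)) * hc₆)
    exact (inv_eq_of_mul_eq_one_right h).symm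
  subst h1 h2
  have hz₁i : (1 : ℂ) - z₁⁻¹ ≠ 0 := by
    rw [sub_ne_zero]; intro h; exact hz₁1 (by field_simp at h; linear_combination h)
  have hz₂i : (1 : ℂ) - z₂⁻¹ ≠ 0 := by
    rw [sub_ne_zero]; intro h; exact hz₂1 (by field_simp at h; linear_combination h)
  -- z₂ = z₁ from c₃
  have h12 : z₂ = z₁ := by
    field_simp at hc₃
    exact hc₃.symm
  subst h12
  -- z₄ = z₃ from c₇
  have h34 : z₄ = z₃ := by
    field_simp at hc₇
    exact mul_right_cancel₀ (mul_ne_zero (mul_ne_zero hz₂s hz₂0) hz₂m)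
      (show z₄ * ((1 - z₂) * z₂ * (z₂ - 1)) = z₃ * ((1 - z₂) * z₂ * (z₂ - 1)) by
        linear_combination (-((1 - z₂) * z₂ * (z₂ - 1))) * hc₇)
  subst h34
  -- now everything is in terms of z₂ (= u) and z₃ (= v)
  simp only [inv_inv] at hA hB hP hQ
  have r2 : (1:ℂ) - z₂⁻¹ = (z₂ - 1) * z₂⁻¹ := by field_simp
  have r4 : (1:ℂ) - z₄⁻¹ = (z₄ - 1) * z₄⁻¹ := by field_simp
  have hAv : A = -z₂ := by
    rw [hA, div_eq_iff hz₂i, r2]; field_simp; ring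
  have hBv : B = -z₄ := by
    rw [hB, div_eq_iff (mul_ne_zero hz₂i hz₄i), r2, r4]; field_simp; ring
  have hPv : P = z₂ ^ 6 := by
    rw [hP, div_eq_iff (mul_ne_zero (mul_ne_zero (mul_ne_zero hz₂i hz₂i) hz₄i)
      (mul_ne_zero (mul_ne_zero (inv_ne_zero hz₂0) (inv_ne_zero hz₂0)) (inv_ne_zero hz₄i))),
      r2, r4]
    field_simp
    ring
  have hQv : Q = z₄ ^ 6 := by
    rw [hQ, div_eq_iff (mul_ne_zero (mul_ne_zero (mul_ne_zero hz₂i hz₂i)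
        (pow_ne_zero 2 hz₄i))
      (mul_ne_zero (mul_ne_zero (mul_ne_zero (inv_ne_zero hz₂i) (inv_ne_zero hz₂i))
        (pow_ne_zero 3 (inv_ne_zero hz₄0))) (inv_ne_zero hz₄0))), r2, r4]
    simp only [mul_inv, inv_inv]
    field_simp
    have hDD : (z₄ ^ 6 * z₂ ^ 2 - z₄ ^ 6 * z₂ ^ 3 * 2 + z₄ ^ 6 * z₂ ^ 4) ≠ 0 := by
      have e : (z₄ ^ 6 * z₂ ^ 2 - z₄ ^ 6 * z₂ ^ 3 * 2 + z₄ ^ 6 * z₂ ^ 4)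
          = z₄ ^ 6 * z₂ ^ 2 * (z₂ - 1) ^ 2 := by ring
      rw [e]
      exact mul_ne_zero (mul_ne_zero (pow_ne_zero 6 hz₄0) (pow_ne_zero 2 hz₂0))
        (pow_ne_zero 2 hz₂m)
    have hw := mul_inv_cancel₀ hDD
    ring
  subst hAv hBv hPv hQv
  constructor
  · ring
  · rw [mul_inv_eq_iff_eq_mul₀ (pow_ne_zero 6 hz₄0)]
    field_simp
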